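/- For every integer n ≥ 3 and every integer l with 0 ≤ l ≤ ⌊n/3⌋, each of the polynomials P_l, Q_l, R_l is monic of degree l, all of its coefficients are positive (for l ≥ 1), and all of its roots are real, negative and simple. -/

import Mathlib

/-- Coefficient in the recurrence for `P_l`. -/
noncomputable def cP (n l : ℕ) : ℝ :=
  ((n : ℝ) - 3 * l + 2) * ((n : ℝ) - 3 * l + 3) * (3 * (l : ℝ) - 2) * (3 * (l : ℝ) - 1)

/-- Coefficient in the recurrence for `Q_l`. -/
noncomputable def cQ (n l : ℕ) : ℝ :=
  ((n : ℝ) - 3 * l + 1) * ((n : ℝ) - 3 * l + 2) * (3 * (l : ℝ) - 1) * (3 * (l : ℝ))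

/-- Coefficient in the recurrence for `R_l`. -/
noncomputable def cR (n l : ℕ) : ℝ :=
  ((n : ℝ) - 3 * l) * ((n : ℝ) - 3 * l + 1) * (3 * (l : ℝ)) * (3 * (l : ℝ) + 1)

/-- The triple `(P_l, Q_l, R_l)` of real polynomials in `ξ` defined by
`P₀ = Q₀ = R₀ = 1` and
`P_l = ξ·R_{l-1} + (n-3l+2)(n-3l+3)(3l-2)(3l-1)·P_{l-1}`,
`Q_l = P_l + (n-3l+1)(n-3l+2)(3l-1)(3l)·Q_{l-1}`,
`R_l = Q_l + (n-3l)(n-3l+1)(3l)(3l+1)·R_{l-1}`. -/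
noncomputable def PQR (n : ℕ) : ℕ → Polynomial ℝ × Polynomial ℝ × Polynomial ℝ
  | 0 => (1, 1, 1)
  | l + 1 =>
      let prev := PQR n l
      let P := Polynomial.X * prev.2.2 + Polynomial.C (cP n (l + 1)) * prev.1
      let Q := P + Polynomial.C (cQ n (l + 1)) * prev.2.1
      let R := Q + Polynomial.C (cR n (l + 1)) * prev.2.2
      (P, Q, R)

/-- A real polynomial has all roots real, negative and simple: every complex root is
real and negative, and has multiplicity one. -/
def NegRealSimpleRoots (p : Polynomial ℝ) : Prop :=
  ∀ z : ℂ, (p.map (algebraMap ℝ ℂ)).eval z = 0 →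
    z.im = 0 ∧ z.re < 0 ∧ (p.map (algebraMap ℝ ℂ)).rootMultiplicity z = 1

set_option maxHeartbeats 1000000

open Polynomial Finset


lemma prod_sign_nonneg (l k : ℕ) (hk : k ≤ l) (x : ℕ → ℝ) (y : ℝ)
    (hlt : ∀ i < k, x i < y) (hge : ∀ i, k ≤ i → i < l → y ≤ x i) :
    0 ≤ (-1 : ℝ)^(l-k) * ∏ i ∈ range l, (y - x i) := by
  have hsplit : ∏ i ∈ range l, (y - x i)
      = (∏ i ∈ range k, (y - x i)) * ∏ i ∈ range (l-k), (y - x (k + i)) := by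
    have hkl : k + (l - k) = l := by omega
    have h := Finset.prod_range_add (fun i => y - x i) k (l-k)
    rw [hkl] at h
    exact h
  have h1 : 0 < ∏ i ∈ range k, (y - x i) :=
    Finset.prod_pos (fun i hi => by
      have := hlt i (Finset.mem_range.mp hi); linarith)
  have h2 : ∏ i ∈ range (l-k), (y - x (k + i))
      = (-1 : ℝ)^(l-k) * ∏ i ∈ range (l-k), (x (k+i) - y) := by
    calc ∏ i ∈ range (l-k), (y - x (k + i))
        = ∏ i ∈ range (l-k), ((-1) * (x (k+i) - y)) := by
          apply Finset.prod_congr rfl; intros; ring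
      _ = (-1 : ℝ)^(l-k) * ∏ i ∈ range (l-k), (x (k+i) - y) := by
          rw [Finset.prod_mul_distrib, Finset.prod_const, Finset.card_range]
  have h3 : 0 ≤ ∏ i ∈ range (l-k), (x (k+i) - y) :=
    Finset.prod_nonneg (fun i hi => by
      have hi' := Finset.mem_range.mp hi
      have := hge (k+i) (Nat.le_add_right _ _) (by omega); linarith)
  rw [hsplit, h2]
  have h11 : ((-1:ℝ))^(l-k) * ((-1:ℝ))^(l-k) = 1 := by
    rw [← mul_pow]; norm_num
  calc (0:ℝ) ≤ (∏ i ∈ range k, (y - x i)) * ∏ i ∈ range (l-k), (x (k+i) - y) := by positivity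
    _ = (-1:ℝ)^(l-k) * ((∏ i ∈ range k, (y - x i)) * ((-1:ℝ)^(l-k) * ∏ i ∈ range (l-k), (x (k+i) - y))) := by
        rw [show ∀ a b c : ℝ, a * (b * (a * c)) = (a*a) * (b * c) from by intros; ring, h11]; ring

lemma prod_sign_pos (l k : ℕ) (hk : k ≤ l) (x : ℕ → ℝ) (y : ℝ)
    (hlt : ∀ i < k, x i < y) (hgt : ∀ i, k ≤ i → i < l → y < x i) :
    0 < (-1 : ℝ)^(l-k) * ∏ i ∈ range l, (y - x i) := by
  have hne : (-1 : ℝ)^(l-k) * ∏ i ∈ range l, (y - x i) ≠ 0 := by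
    apply mul_ne_zero
    · positivity
    · apply Finset.prod_ne_zero_iff.mpr
      intro i hi
      have hi' := Finset.mem_range.mp hi
      rcases lt_or_ge i k with h | h
      · have := hlt i h; intro hc; linarith
      · have := hgt i h hi'; intro hc; linarith
  exact lt_of_le_of_ne (prod_sign_nonneg l k hk x y hlt (fun i h1 h2 => (hgt i h1 h2).le)) (Ne.symm hne)

lemma eval_prod_root (l : ℕ) (x : ℕ → ℝ) (y : ℝ) :
    Polynomial.eval y (∏ i ∈ range l, (X - C (x i))) = ∏ i ∈ range l, (y - x i) := by
  simp [Polynomial.eval_prod]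

lemma exists_root_Ioo (p : Polynomial ℝ) {a b : ℝ} (hab : a < b)
    (h : p.eval a * p.eval b < 0) : ∃ x, a < x ∧ x < b ∧ p.eval x = 0 := by
  have hc : ContinuousOn (fun x => p.eval x) (Set.Icc a b) := (p.continuous).continuousOn
  rcases mul_neg_iff.mp h with ⟨ha, hb⟩ | ⟨ha, hb⟩
  · have : (0:ℝ) ∈ Set.Ioo (p.eval b) (p.eval a) := ⟨hb, ha⟩
    obtain ⟨x, hx, hx0⟩ := intermediate_value_Ioo' hab.le hc this
    exact ⟨x, hx.1, hx.2, hx0⟩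
  · have : (0:ℝ) ∈ Set.Ioo (p.eval a) (p.eval b) := ⟨ha, hb⟩
    obtain ⟨x, hx, hx0⟩ := intermediate_value_Ioo hab.le hc this
    exact ⟨x, hx.1, hx.2, hx0⟩


lemma prod_dvd_of_roots {p : Polynomial ℝ} (hp : p ≠ 0) {m : ℕ}
    (y : ℕ → ℝ) (hmono : ∀ i j, i < j → j < m → y i < y j) (hroot : ∀ i < m, p.eval (y i) = 0) :
    (∏ i ∈ range m, (X - C (y i))) ∣ p := by
  classical
  have hslift : ∏ i ∈ range m, (X - C (y i))
      = (Multiset.map (fun a => X - C a) (Multiset.map y (range m).val)).prod := by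
    rw [Multiset.map_map]
    rfl
  rw [hslift]
  refine dvd_trans (Multiset.prod_dvd_prod_of_le (Multiset.map_le_map ?_)) (Polynomial.prod_multiset_X_sub_C_dvd p)
  -- Multiset.map y (range m).val ≤ p.roots
  have hnodup : (Multiset.map y (range m).val).Nodup := by
    refine Multiset.Nodup.map_on ?_ (Finset.range m).nodup
    intro i hi j hj hij
    simp only [Finset.mem_range, Finset.mem_val] at hi hj
    rcases Nat.lt_trichotomy i j with h | h | h
    · exact absurd hij (ne_of_lt (hmono i j h hj))
    · exact h
    · exact absurd hij.symm (ne_of_lt (hmono j i h hi))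
  rw [Multiset.le_iff_count]
  intro a
  rcases Nat.eq_zero_or_pos (Multiset.count a (Multiset.map y (range m).val)) with h | h
  · rw [h]; exact Nat.zero_le _
  · have hmem : a ∈ Multiset.map y (range m).val := Multiset.count_pos.mp h
    obtain ⟨i, hi, rfl⟩ := Multiset.mem_map.mp hmem
    simp only [Finset.mem_val, Finset.mem_range] at hi
    have h1 : Multiset.count (y i) (Multiset.map y (range m).val) ≤ 1 :=
      Multiset.nodup_iff_count_le_one.mp hnodup _
    have h2 : 1 ≤ Multiset.count (y i) p.roots := by
      rw [Polynomial.count_roots]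
      exact (Polynomial.rootMultiplicity_pos hp).mpr (hroot i hi)
    omega

lemma monic_eq_prod_of_roots {p : Polynomial ℝ} (hp : p.Monic) {m : ℕ} (hdeg : p.natDegree = m)
    (y : ℕ → ℝ) (hmono : ∀ i j, i < j → j < m → y i < y j) (hroot : ∀ i < m, p.eval (y i) = 0) :
    p = ∏ i ∈ range m, (X - C (y i)) := by
  have hd := prod_dvd_of_roots hp.ne_zero y hmono hroot
  obtain ⟨q, hq⟩ := hd
  have hdm : (∏ i ∈ range m, (X - C (y i))).Monic :=
    monic_prod_of_monic _ _ (fun i _ => monic_X_sub_C (y i))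
  have hqm : q.Monic := hdm.of_mul_monic_left (hq ▸ hp)
  have hqd : q.natDegree = 0 := by
    have h1 : p.natDegree = (∏ i ∈ range m, (X - C (y i))).natDegree + q.natDegree := by
      rw [hq]; exact natDegree_mul hdm.ne_zero hqm.ne_zero
    have h2 : (∏ i ∈ range m, (X - C (y i))).natDegree = m := by
      rw [natDegree_prod _ _ (fun i _ => X_sub_C_ne_zero (y i))]
      simp
    omega
  have : q = 1 := hqm.natDegree_eq_zero.mp hqd
  rw [hq, this, mul_one]

lemma monic_eq_prod_of_roots_succ {p : Polynomial ℝ} (hp : p.Monic) {m : ℕ}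
    (hdeg : p.natDegree = m + 1)
    (y : ℕ → ℝ) (hmono : ∀ i j, i < j → j < m → y i < y j) (hroot : ∀ i < m, p.eval (y i) = 0) :
    ∃ a : ℝ, p = (X - C a) * ∏ i ∈ range m, (X - C (y i)) := by
  have hd := prod_dvd_of_roots hp.ne_zero y hmono hroot
  obtain ⟨q, hq⟩ := hd
  have hdm : (∏ i ∈ range m, (X - C (y i))).Monic :=
    monic_prod_of_monic _ _ (fun i _ => monic_X_sub_C (y i))
  have hqm : q.Monic := hdm.of_mul_monic_left (hq ▸ hp)
  have h2 : (∏ i ∈ range m, (X - C (y i))).natDegree = m := by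
    rw [natDegree_prod _ _ (fun i _ => X_sub_C_ne_zero (y i))]
    simp
  have hqd : q.natDegree = 1 := by
    have h1 : p.natDegree = (∏ i ∈ range m, (X - C (y i))).natDegree + q.natDegree := by
      rw [hq]; exact natDegree_mul hdm.ne_zero hqm.ne_zero
    omega
  have hqe : ∃ c : ℝ, q = X - C c := by
    refine ⟨-(q.coeff 0), ?_⟩
    have h3 := Polynomial.eq_X_add_C_of_natDegree_le_one (hqd.le)
    have hc1 : q.coeff 1 = 1 := by
      have := hqm.leadingCoeff
      rwa [Polynomial.leadingCoeff, hqd] at this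
    rw [hc1] at h3
    rw [map_neg, sub_neg_eq_add]
    conv_lhs => rw [h3]
    rw [Polynomial.C_1, one_mul]
  obtain ⟨c, hc⟩ := hqe
  exact ⟨c, by rw [hq, hc, mul_comm]⟩

lemma coeff_pos_of_neg_roots (s : Multiset ℝ) (h : ∀ a ∈ s, a < 0) :
    ∀ j ≤ Multiset.card s, 0 < ((Multiset.map (fun a => X - C a) s).prod).coeff j := by
  induction s using Multiset.induction with
  | empty => intro j hj; simp at hj; simp [hj]
  | cons a s ih =>
    intro j hj
    have ha : a < 0 := h a (Multiset.mem_cons_self a s)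
    have hs : ∀ b ∈ s, b < 0 := fun b hb => h b (Multiset.mem_cons_of_mem hb)
    have ih' := ih hs
    set q := (Multiset.map (fun a => X - C a) s).prod with hqdef
    have hqm : q.Monic := monic_multiset_prod_of_monic s _ (fun a _ => monic_X_sub_C a)
    have hqdeg : q.natDegree = Multiset.card s := by
      rw [hqdef, natDegree_multiset_prod_of_monic _ (fun f hf => by
        obtain ⟨b, _, rfl⟩ := Multiset.mem_map.mp hf; exact monic_X_sub_C b)]
      rw [Multiset.map_map]
      simp
    have hnn : ∀ j, 0 ≤ q.coeff j := by
      intro j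
      rcases le_or_gt j (Multiset.card s) with h | h
      · exact (ih' j h).le
      · rw [Polynomial.coeff_eq_zero_of_natDegree_lt (by omega)]
    rw [Multiset.map_cons, Multiset.prod_cons]
    have hco : ((X - C a) * q).coeff j = (X * q).coeff j - a * q.coeff j := by
      rw [sub_mul, Polynomial.coeff_sub, Polynomial.coeff_C_mul]
    rw [hco]
    rcases j with _ | k
    · rw [Polynomial.mul_coeff_zero]
      simp only [Polynomial.coeff_X_zero, zero_mul, zero_sub]
      have := ih' 0 (Nat.zero_le _)
      nlinarith
    · rw [Polynomial.coeff_X_mul]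
      have hk : k ≤ Multiset.card s := by
        rw [Multiset.card_cons] at hj; omega
      have h1 := ih' k hk
      have h2 := hnn (k+1)
      nlinarith


def RootRep (l : ℕ) (x : ℕ → ℝ) (p : Polynomial ℝ) : Prop :=
  (∀ i j, i < j → j < l → x i < x j) ∧ (∀ i < l, x i < 0) ∧
    p = ∏ i ∈ range l, (X - C (x i))

lemma RootRep.monic {l : ℕ} {x : ℕ → ℝ} {p : Polynomial ℝ} (h : RootRep l x p) : p.Monic := by
  rw [h.2.2]; exact monic_prod_of_monic _ _ (fun i _ => monic_X_sub_C (x i))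

lemma RootRep.natDeg {l : ℕ} {x : ℕ → ℝ} {p : Polynomial ℝ} (h : RootRep l x p) : p.natDegree = l := by
  rw [h.2.2, natDegree_prod _ _ (fun i _ => X_sub_C_ne_zero (x i))]
  simp

lemma RootRep.coeff_pos {l : ℕ} {x : ℕ → ℝ} {p : Polynomial ℝ} (h : RootRep l x p) :
    ∀ i ≤ l, 0 < p.coeff i := by
  intro i hi
  have key := coeff_pos_of_neg_roots (Multiset.map x (range l).val)
    (by
      intro a ha
      obtain ⟨j, hj, rfl⟩ := Multiset.mem_map.mp ha
      simp only [Finset.mem_val, Finset.mem_range] at hj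
      exact h.2.1 j hj)
  have hcard : Multiset.card (Multiset.map x (range l).val) = l := by simp
  have heq : (Multiset.map (fun a => X - C a) (Multiset.map x (range l).val)).prod
      = ∏ j ∈ range l, (X - C (x j)) := by
    rw [Multiset.map_map]; rfl
  have := key i (by omega)
  rw [heq, ← h.2.2] at this
  exact this

lemma RootRep.negRealSimpleRoots {l : ℕ} {x : ℕ → ℝ} {p : Polynomial ℝ} (h : RootRep l x p) : NegRealSimpleRoots p := by
  classical
  intro z hz
  have hmap : p.map (algebraMap ℝ ℂ) = ∏ i ∈ range l, (X - C ((x i : ℂ))) := by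
    rw [h.2.2, Polynomial.map_prod]
    apply Finset.prod_congr rfl
    intro i _
    simp
  rw [hmap] at hz
  rw [Polynomial.eval_prod] at hz
  obtain ⟨i, hi, hzi⟩ := Finset.prod_eq_zero_iff.mp hz
  simp only [Polynomial.eval_sub, Polynomial.eval_X, Polynomial.eval_C] at hzi
  have hzx : z = ((x i : ℝ) : ℂ) := by linear_combination hzi
  have hi' := Finset.mem_range.mp hi
  refine ⟨by rw [hzx]; simp, by rw [hzx]; simpa using h.2.1 i hi', ?_⟩
  -- root multiplicity
  have hms : p.map (algebraMap ℝ ℂ)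
      = (Multiset.map (fun a => X - C a) (Multiset.map (fun j => ((x j : ℝ) : ℂ)) (range l).val)).prod := by
    rw [Multiset.map_map, hmap]; rfl
  have hroots : (p.map (algebraMap ℝ ℂ)).roots
      = Multiset.map (fun j => ((x j : ℝ) : ℂ)) (range l).val := by
    rw [hms, Polynomial.roots_multiset_prod_X_sub_C]
  have hnodup : (Multiset.map (fun j => ((x j : ℝ) : ℂ)) (range l).val).Nodup := by
    refine Multiset.Nodup.map_on ?_ (Finset.range l).nodup
    intro a ha b hb hab
    simp only [Finset.mem_val, Finset.mem_range] at ha hb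
    have : x a = x b := by exact_mod_cast hab
    rcases Nat.lt_trichotomy a b with hc | hc | hc
    · exact absurd this (ne_of_lt (h.1 a b hc hb))
    · exact hc
    · exact absurd this.symm (ne_of_lt (h.1 b a hc ha))
  rw [← Polynomial.count_roots, hroots, hzx]
  exact Multiset.count_eq_one_of_mem hnodup (Multiset.mem_map.mpr ⟨i, hi, rfl⟩)


-- mini sign lemmas
lemma neg_one_pow_mul_self (m : ℕ) : ((-1:ℝ)^m) * ((-1:ℝ)^m) = 1 := by
  rw [← mul_pow]; norm_num

lemma sign_cancel {s v w : ℝ} (hs : s * s = 1) (h1 : 0 < s * (v * w)) (h2 : 0 < s * w) :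
    0 < v := by nlinarith

lemma sign_contra {s v : ℝ} (hs : s * s = 1) (h1 : 0 < s * v) (h2 : 0 ≤ -(s * v)) : False := by
  nlinarith

lemma pos_left_of_mul_pos {v w : ℝ} (h : 0 < v * w) (hw : 0 < w) : 0 < v := by
  by_contra hv
  exact absurd h (not_lt.mpr (mul_nonpos_of_nonpos_of_nonneg (not_lt.mp hv) hw.le))

section CR
variable {l : ℕ} {F : Polynomial ℝ}

lemma construct_roots (hF : F.Monic) (hdeg : F.natDegree = l + 1)
    (rr : ℕ → ℝ) (hmono : ∀ i j, i < j → j < l → rr i < rr j) (hneg : ∀ i < l, rr i < 0)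
    (hsign : ∀ j < l, 0 < (-1:ℝ)^(l-j) * F.eval (rr j)) (h0 : 0 < F.eval 0) :
    ∃ u : ℕ → ℝ,
      F = ∏ i ∈ range (l+1), (X - C (u i)) ∧
      (∀ i j, i < j → j < l + 1 → u i < u j) ∧
      (∀ i < l + 1, u i < 0) ∧
      (∀ m i, m < i → i < l + 1 → m < l → rr m < u i) ∧
      (∀ i m, i ≤ m → m < l → u i < rr m) ∧
      (∀ i < l + 1, F.eval (u i) = 0) := by
  classical
  set rb : ℕ → ℝ := fun j => if j < l then rr j else 0 with hrb
  have hrbneg : ∀ j, rb j ≤ 0 := by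
    intro j; simp only [hrb]
    split
    · exact (hneg j (by assumption)).le
    · exact le_refl 0
  have hrbmono : ∀ i j, i < j → j ≤ l → rb i < rb j := by
    intro i j hij hj
    simp only [hrb]
    by_cases h2 : j < l
    · rw [if_pos (lt_trans hij h2), if_pos h2]; exact hmono i j hij h2
    · have hjl : j = l := by omega
      have hil : i < l := by omega
      rw [if_pos hil, if_neg h2]; exact hneg i hil
  have hrbmono' : ∀ i j, i ≤ j → j ≤ l → rb i ≤ rb j := by
    intro i j hij hj
    rcases eq_or_lt_of_le hij with rfl | h
    · exact le_refl _
    · exact (hrbmono i j h hj).le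
  have hsign2 : ∀ j ≤ l, 0 < (-1:ℝ)^(l-j) * F.eval (rb j) := by
    intro j hj
    by_cases h2 : j < l
    · simpa only [hrb, if_pos h2] using hsign j h2
    · have : j = l := by omega
      subst this
      simpa only [hrb, if_neg h2, Nat.sub_self, pow_zero, one_mul] using h0
  have hex : ∀ j, ∃ v, j < l → (rb j < v ∧ v < rb (j+1) ∧ F.eval v = 0) := by
    intro j
    by_cases hj : j < l
    · have h1 := hsign2 j hj.le
      have h2 := hsign2 (j+1) (by omega)
      have hs : ((-1:ℝ)^(l-(j+1))) * ((-1:ℝ)^(l-(j+1))) = 1 := neg_one_pow_mul_self _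
      have hpow : (-1:ℝ)^(l-j) = -((-1:ℝ)^(l-(j+1))) := by
        rw [show l - j = (l - (j+1)) + 1 from by omega, pow_succ]
        ring
      have hmul : F.eval (rb j) * F.eval (rb (j+1)) < 0 := by
        rw [hpow] at h1
        nlinarith
      obtain ⟨v, hv1, hv2, hv3⟩ := exists_root_Ioo F (hrbmono j (j+1) (by omega) (by omega)) hmul
      exact ⟨v, fun _ => ⟨hv1, hv2, hv3⟩⟩
    · exact ⟨0, fun hc => absurd hc hj⟩
  choose f hf using hex
  have fmono : ∀ i j, i < j → j < l → f i < f j := by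
    intro i j hij hj
    have h1 := (hf i (by omega)).2.1
    have h2 := (hf j hj).1
    have := hrbmono' (i+1) j (by omega) (by omega)
    linarith
  have froots : ∀ i < l, F.eval (f i) = 0 := fun i hi => (hf i hi).2.2
  obtain ⟨a, hFa⟩ := monic_eq_prod_of_roots_succ hF hdeg f fmono froots
  set u : ℕ → ℝ := fun j => Nat.casesOn j a f with hu
  have hprod : F = ∏ i ∈ range (l+1), (X - C (u i)) := by
    rw [Finset.prod_range_succ']
    rw [hFa, mul_comm]
    rfl
  -- negativity of f
  have hfneg : ∀ i < l, f i < 0 := by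
    intro i hi
    have := (hf i hi).2.1
    have := hrbneg (i+1)
    linarith
  -- a < 0
  have haneg : a < 0 := by
    have hev : F.eval 0 = (0 - a) * ∏ i ∈ range l, (0 - f i) := by
      rw [hFa]; simp [Polynomial.eval_prod]
    have hPr : 0 < ∏ i ∈ range l, (0 - f i) :=
      Finset.prod_pos (fun i hi => by have := hfneg i (Finset.mem_range.mp hi); linarith)
    have := pos_left_of_mul_pos (by rw [hev] at h0; exact h0) hPr
    linarith
  -- a < rr 0 when 0 < l
  have har : 0 < l → a < rr 0 := by
    intro hl
    have h1 := hsign2 0 (by omega)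
    have hrb0 : rb 0 = rr 0 := by simp only [hrb, if_pos hl]
    have hev : F.eval (rr 0) = (rr 0 - a) * ∏ i ∈ range l, (rr 0 - f i) := by
      rw [hFa]; simp [Polynomial.eval_prod]
    have hPr : 0 < (-1:ℝ)^(l-0) * ∏ i ∈ range l, (rr 0 - f i) := by
      apply prod_sign_pos l 0 (Nat.zero_le _) f (rr 0) (by omega)
      intro i _ hi
      have h2 := (hf i hi).1
      have h3 : rb 0 ≤ rb i := hrbmono' 0 i (Nat.zero_le _) (by omega)
      rw [hrb0] at h3
      linarith
    rw [hrb0, hev] at h1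
    have := sign_cancel (neg_one_pow_mul_self (l-0)) h1 hPr
    linarith
  refine ⟨u, hprod, ?_, ?_, ?_, ?_, ?_⟩
  · -- mono
    intro i j hij hj
    match i, j with
    | 0, (k+1) =>
      have hk : k < l := by omega
      have h2 := (hf k hk).1
      have h3 : rb 0 ≤ rb k := hrbmono' 0 k (Nat.zero_le _) (by omega)
      have h4 := har (by omega)
      have hrb0 : rb 0 = rr 0 := by simp only [hrb, if_pos (show 0 < l by omega)]
      show a < f k
      rw [hrb0] at h3
      linarith
    | (i+1), (k+1) =>
      exact fmono i k (by omega) (by omega)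
  · -- neg
    intro i hi
    match i with
    | 0 => exact haneg
    | (k+1) => exact hfneg k (by omega)
  · -- Hlo
    intro m i hmi hi hm
    match i with
    | 0 => omega
    | (k+1) =>
      show rr m < f k
      have h2 := (hf k (by omega)).1
      have h3 : rb m ≤ rb k := hrbmono' m k (by omega) (by omega)
      have hrbm : rb m = rr m := by simp only [hrb, if_pos hm]
      rw [hrbm] at h3
      linarith
  · -- Hhi
    intro i m him hm
    match i with
    | 0 =>
      show a < rr m
      have h4 := har (by omega)
      rcases Nat.eq_zero_or_pos m with rfl | hm0
      · exact h4
      · have := hmono 0 m hm0 hm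
        linarith
    | (k+1) =>
      show f k < rr m
      have h2 := (hf k (by omega)).2.1
      have h3 : rb (k+1) ≤ rb m := hrbmono' (k+1) m (by omega) (by omega)
      have hrbm : rb m = rr m := by simp only [hrb, if_pos hm]
      rw [hrbm] at h3
      linarith
  · -- roots
    intro i hi
    match i with
    | 0 =>
      show F.eval a = 0
      rw [hFa]
      simp
    | (k+1) => exact froots k (by omega)

end CR

def InvPQR (n l : ℕ) : Prop :=
  ∃ pr qr rr : ℕ → ℝ,
    RootRep l pr (PQR n l).1 ∧ RootRep l qr (PQR n l).2.1 ∧ RootRep l rr (PQR n l).2.2 ∧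
    (∀ i < l, rr i ≤ qr i ∧ qr i < pr i) ∧ (∀ i j, i < j → j < l → pr i < rr j)

lemma invPQR_zero (n : ℕ) : InvPQR n 0 := by
  refine ⟨fun _ => 0, fun _ => 0, fun _ => 0, ?_, ?_, ?_, ?_, ?_⟩ <;>
    first
      | exact ⟨fun i j h1 h2 => by omega, fun i h => by omega, by simp [PQR]⟩
      | intro i h; omega
      | intro i j h1 h2; omega

lemma invPQR_step {n l : ℕ} (h : InvPQR n l) (hl : 3 * (l + 1) ≤ n) : InvPQR n (l + 1) := by
  obtain ⟨pr, qr, rr, hP, hQ, hR, hcmp, hsep⟩ := h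
  set P := (PQR n l).1 with hsetP
  set Q := (PQR n l).2.1 with hsetQ
  set R := (PQR n l).2.2 with hsetR
  set c1 := cP n (l+1) with hc1def
  set c2 := cQ n (l+1) with hc2def
  set c3 := cR n (l+1) with hc3def
  set P' : Polynomial ℝ := Polynomial.X * R + Polynomial.C c1 * P with hP'def
  set Q' : Polynomial ℝ := P' + Polynomial.C c2 * Q with hQ'def
  set R' : Polynomial ℝ := Q' + Polynomial.C c3 * R with hR'def
  have hPQR1 : (PQR n (l+1)).1 = P' := by
    rw [hP'def, hsetP, hsetR, hc1def]; simp [PQR]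
  have hPQR2 : (PQR n (l+1)).2.1 = Q' := by
    rw [hQ'def, hP'def, hsetP, hsetQ, hsetR, hc1def, hc2def]; simp [PQR]
  have hPQR3 : (PQR n (l+1)).2.2 = R' := by
    rw [hR'def, hQ'def, hP'def, hsetP, hsetQ, hsetR, hc1def, hc2def, hc3def]; simp [PQR]
  have hrrle : ∀ i j, i ≤ j → j < l → rr i ≤ rr j := by
    intro i j hij hj
    rcases eq_or_lt_of_le hij with rfl | h
    · exact le_rfl
    · exact (hR.1 i j h hj).le
  have hprle : ∀ i j, i ≤ j → j < l → pr i ≤ pr j := by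
    intro i j hij hj
    rcases eq_or_lt_of_le hij with rfl | h
    · exact le_rfl
    · exact (hP.1 i j h hj).le
  -- cast facts
  have hcast : ((l+1 : ℕ) : ℝ) = (l : ℝ) + 1 := by push_cast; ring
  have hnR : (3:ℝ) * ((l:ℝ) + 1) ≤ (n:ℝ) := by exact_mod_cast hl
  have hlR : (0:ℝ) ≤ (l:ℝ) := Nat.cast_nonneg l
  have hc1 : 0 < c1 := by
    rw [hc1def, cP, hcast]
    have f1 : (0:ℝ) < (n:ℝ) - 3*((l:ℝ)+1) + 2 := by linarith
    have f2 : (0:ℝ) < (n:ℝ) - 3*((l:ℝ)+1) + 3 := by linarith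
    have f3 : (0:ℝ) < 3*((l:ℝ)+1) - 2 := by linarith
    have f4 : (0:ℝ) < 3*((l:ℝ)+1) - 1 := by linarith
    exact mul_pos (mul_pos (mul_pos f1 f2) f3) f4
  have hc2 : 0 < c2 := by
    rw [hc2def, cQ, hcast]
    have f1 : (0:ℝ) < (n:ℝ) - 3*((l:ℝ)+1) + 1 := by linarith
    have f2 : (0:ℝ) < (n:ℝ) - 3*((l:ℝ)+1) + 2 := by linarith
    have f3 : (0:ℝ) < 3*((l:ℝ)+1) - 1 := by linarith
    have f4 : (0:ℝ) < 3*((l:ℝ)+1) := by linarith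
    exact mul_pos (mul_pos (mul_pos f1 f2) f3) f4
  have hc3 : 0 ≤ c3 := by
    rw [hc3def, cR, hcast]
    have f1 : (0:ℝ) ≤ (n:ℝ) - 3*((l:ℝ)+1) := by linarith
    have f2 : (0:ℝ) ≤ (n:ℝ) - 3*((l:ℝ)+1) + 1 := by linarith
    have f3 : (0:ℝ) ≤ 3*((l:ℝ)+1) := by linarith
    have f4 : (0:ℝ) ≤ 3*((l:ℝ)+1) + 1 := by linarith
    exact mul_nonneg (mul_nonneg (mul_nonneg f1 f2) f3) f4
  -- monicity and degrees
  have hPm := hP.monic; have hQm := hQ.monic; have hRm := hR.monic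
  have hPd := hP.natDeg; have hQd := hQ.natDeg; have hRd := hR.natDeg
  have hXRm : (Polynomial.X * R).Monic := Polynomial.monic_X.mul hRm
  have hXRd : (Polynomial.X * R).natDegree = l + 1 := by
    rw [Polynomial.natDegree_mul Polynomial.X_ne_zero hRm.ne_zero, Polynomial.natDegree_X, hRd]
    omega
  have hdegC : ∀ (c : ℝ) (S : Polynomial ℝ), S.natDegree = l →
      (Polynomial.C c * S).degree < (Polynomial.X * R).degree := by
    intro c S hS
    have h1 : (Polynomial.C c * S).degree ≤ (l : WithBot ℕ) := by
      refine le_trans (Polynomial.degree_mul_le _ _) ?_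
      have h2 : S.degree ≤ (l : WithBot ℕ) := by
        rw [← hS]; exact Polynomial.degree_le_natDegree
      calc (Polynomial.C c).degree + S.degree ≤ 0 + S.degree :=
            add_le_add_left Polynomial.degree_C_le _
        _ = S.degree := zero_add _
        _ ≤ (l : WithBot ℕ) := h2
    refine lt_of_le_of_lt h1 ?_
    rw [Polynomial.degree_eq_natDegree hXRm.ne_zero, hXRd]
    exact_mod_cast Nat.lt_succ_self l
  have hP'm : P'.Monic := hXRm.add_of_left (hdegC c1 P hPd)
  have hP'deg : P'.degree = (Polynomial.X * R).degree :=
    Polynomial.degree_add_eq_left_of_degree_lt (hdegC c1 P hPd)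
  have hP'd : P'.natDegree = l + 1 := by
    rw [Polynomial.natDegree_eq_of_degree_eq hP'deg, hXRd]
  have hdegC' : ∀ (c : ℝ) (S : Polynomial ℝ), S.natDegree = l →
      (Polynomial.C c * S).degree < P'.degree := by
    intro c S hS
    rw [hP'deg]
    exact hdegC c S hS
  have hQ'm : Q'.Monic := hP'm.add_of_left (hdegC' c2 Q hQd)
  have hQ'deg : Q'.degree = P'.degree :=
    Polynomial.degree_add_eq_left_of_degree_lt (hdegC' c2 Q hQd)
  have hQ'd : Q'.natDegree = l + 1 := by
    rw [Polynomial.natDegree_eq_of_degree_eq hQ'deg, hP'd]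
  have hdegC'' : ∀ (c : ℝ) (S : Polynomial ℝ), S.natDegree = l →
      (Polynomial.C c * S).degree < Q'.degree := by
    intro c S hS
    rw [hQ'deg]
    exact hdegC' c S hS
  have hR'm : R'.Monic := hQ'm.add_of_left (hdegC'' c3 R hRd)
  have hR'd : R'.natDegree = l + 1 := by
    rw [Polynomial.natDegree_eq_of_degree_eq
      (Polynomial.degree_add_eq_left_of_degree_lt (hdegC'' c3 R hRd)), hQ'd]
  -- evaluation identities
  have hevP' : ∀ t : ℝ, P'.eval t = t * R.eval t + c1 * P.eval t := by
    intro t; rw [hP'def]; simp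
  have hevQ' : ∀ t : ℝ, Q'.eval t = P'.eval t + c2 * Q.eval t := by
    intro t; rw [hQ'def]; simp
  have hevR' : ∀ t : ℝ, R'.eval t = Q'.eval t + c3 * R.eval t := by
    intro t; rw [hR'def]; simp
  -- roots of R vanish
  have hRroot : ∀ j < l, R.eval (rr j) = 0 := by
    intro j hj
    rw [hR.2.2, eval_prod_root]
    exact Finset.prod_eq_zero (Finset.mem_range.mpr hj) (by ring)
  -- signs of P, Q, R at the points rr j
  have hsP : ∀ j < l, 0 < (-1:ℝ)^(l-j) * P.eval (rr j) := by
    intro j hj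
    rw [hP.2.2, eval_prod_root]
    apply prod_sign_pos l j hj.le pr (rr j)
    · intro i hi; exact hsep i j hi hj
    · intro i h1 h2
      have h3 := hrrle j i h1 h2
      have h4 := (hcmp i h2).1
      have h5 := (hcmp i h2).2
      linarith
  have hsQ : ∀ j < l, 0 ≤ (-1:ℝ)^(l-j) * Q.eval (rr j) := by
    intro j hj
    rw [hQ.2.2, eval_prod_root]
    apply prod_sign_nonneg l j hj.le qr (rr j)
    · intro i hi
      have h1 := (hcmp i (by omega)).2
      have h2 := hsep i j hi hj
      linarith
    · intro i h1 h2
      have h3 := hrrle j i h1 h2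
      have h4 := (hcmp i h2).1
      linarith
  have hsP0 : 0 < P.eval 0 := by
    have h := prod_sign_pos l l le_rfl pr 0 (fun i hi => hP.2.1 i hi)
      (fun i h1 h2 => absurd h1 (by omega))
    rw [Nat.sub_self, pow_zero, one_mul] at h
    rw [hP.2.2, eval_prod_root]
    exact h
  have hsQ0 : 0 < Q.eval 0 := by
    have h := prod_sign_pos l l le_rfl qr 0 (fun i hi => hQ.2.1 i hi)
      (fun i h1 h2 => absurd h1 (by omega))
    rw [Nat.sub_self, pow_zero, one_mul] at h
    rw [hQ.2.2, eval_prod_root]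
    exact h
  have hsR0 : 0 < R.eval 0 := by
    have h := prod_sign_pos l l le_rfl rr 0 (fun i hi => hR.2.1 i hi)
      (fun i h1 h2 => absurd h1 (by omega))
    rw [Nat.sub_self, pow_zero, one_mul] at h
    rw [hR.2.2, eval_prod_root]
    exact h
  -- signs of P' at points
  have hsignP' : ∀ j < l, 0 < (-1:ℝ)^(l-j) * P'.eval (rr j) := by
    intro j hj
    rw [hevP', hRroot j hj]
    have h := mul_pos hc1 (hsP j hj)
    nlinarith [h]
  have h0P' : 0 < P'.eval 0 := by
    rw [hevP']
    nlinarith [mul_pos hc1 hsP0]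
  obtain ⟨u, hUprod, hUmono, hUneg, hUlo, hUhi, hUroot⟩ :=
    construct_roots hP'm hP'd rr hR.1 hR.2.1 hsignP' h0P'
  -- refinement: pr j < u (j+1)
  have hRfU : ∀ j < l, pr j < u (j+1) := by
    intro j hj
    by_contra hle
    push_neg at hle
    set t := u (j+1) with htdef
    have ht1 : rr j < t := hUlo j (j+1) (by omega) (by omega) hj
    have htneg : t ≤ pr j := hle
    have hprneg : pr j < 0 := hP.2.1 j hj
    have hRt : 0 < (-1:ℝ)^(l-(j+1)) * R.eval t := by
      rw [hR.2.2, eval_prod_root]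
      apply prod_sign_pos l (j+1) (by omega) rr t
      · intro i hi
        have h3 := hrrle i j (by omega) hj
        linarith
      · intro i h1 h2
        have := hsep j i (by omega) h2
        linarith
    have hPt : 0 ≤ (-1:ℝ)^(l-j) * P.eval t := by
      rw [hP.2.2, eval_prod_root]
      apply prod_sign_nonneg l j hj.le pr t
      · intro i hi
        have := hsep i j hi hj
        linarith
      · intro i h1 h2
        have h3 := hprle j i h1 h2
        linarith
    have hpow : (-1:ℝ)^(l-j) = -(-1:ℝ)^(l-(j+1)) := by
      rw [show l - j = (l - (j+1)) + 1 from by omega, pow_succ]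
      ring
    have hzero : P'.eval t = 0 := hUroot (j+1) (by omega)
    have heval : P'.eval t = t * R.eval t + c1 * P.eval t := hevP' t
    rw [hzero] at heval
    rw [hpow] at hPt
    have hprod1 : 0 < (-t) * ((-1:ℝ)^(l-(j+1)) * R.eval t) :=
      mul_pos (by linarith : (0:ℝ) < -t) hRt
    have hprod2 : 0 ≤ c1 * (-(-1:ℝ)^(l-(j+1)) * P.eval t) :=
      mul_nonneg hc1.le hPt
    have heval2 : (-1:ℝ)^(l-(j+1)) * (t * R.eval t + c1 * P.eval t) = 0 := by
      rw [← heval, mul_zero]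
    nlinarith [hprod1, hprod2, heval2]
  -- signs of Q' and construction
  have hsignQ' : ∀ j < l, 0 < (-1:ℝ)^(l-j) * Q'.eval (rr j) := by
    intro j hj
    rw [hevQ', hevP', hRroot j hj]
    have h1 := mul_pos hc1 (hsP j hj)
    have h2 := mul_nonneg hc2.le (hsQ j hj)
    nlinarith [h1, h2]
  have h0Q' : 0 < Q'.eval 0 := by
    rw [hevQ', hevP']
    nlinarith [mul_pos hc1 hsP0, mul_pos hc2 hsQ0]
  obtain ⟨v, hVprod, hVmono, hVneg, hVlo, hVhi, hVroot⟩ :=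
    construct_roots hQ'm hQ'd rr hR.1 hR.2.1 hsignQ' h0Q'
  -- signs of R' and construction
  have hsignR' : ∀ j < l, 0 < (-1:ℝ)^(l-j) * R'.eval (rr j) := by
    intro j hj
    have h := hsignQ' j hj
    rw [hevR', hRroot j hj]
    nlinarith [h]
  have h0R' : 0 < R'.eval 0 := by
    rw [hevR']
    nlinarith [mul_nonneg hc3 hsR0.le]
  obtain ⟨w, hWprod, hWmono, hWneg, hWlo, hWhi, hWroot⟩ :=
    construct_roots hR'm hR'd rr hR.1 hR.2.1 hsignR' h0R'
  -- comparison: v i < u i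
  have hVU : ∀ i < l + 1, v i < u i := by
    intro i hi
    by_contra hle
    push_neg at hle
    have hQt : 0 < (-1:ℝ)^(l-i) * Q.eval (u i) := by
      rw [hQ.2.2, eval_prod_root]
      apply prod_sign_pos l i (by omega) qr (u i)
      · intro m hm
        have h1 := (hcmp m (by omega)).2
        have h2 := hRfU m (by omega)
        have h3 : u (m+1) ≤ u i := by
          rcases eq_or_lt_of_le (show m+1 ≤ i by omega) with heq | hlt2
          · rw [heq]
          · exact (hUmono (m+1) i hlt2 hi).le
        linarith
      · intro m h1 h2
        have h3 := hUhi i m h1 h2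
        have h4 := (hcmp m h2).1
        linarith
    have hQ'eval : Q'.eval (u i) = c2 * Q.eval (u i) := by
      rw [hevQ', hUroot i hi, zero_add]
    have hne : u i ≠ v i := by
      intro heq
      have h1 : Q'.eval (u i) = 0 := by
        rw [heq]
        rw [hVprod, eval_prod_root]
        exact Finset.prod_eq_zero (Finset.mem_range.mpr hi) (by ring)
      rw [hQ'eval] at h1
      have hQne : Q.eval (u i) ≠ 0 := by
        intro h2
        rw [h2, mul_zero] at hQt
        exact lt_irrefl 0 hQt
      exact hQne (by
        have := mul_eq_zero.mp h1
        rcases this with h | h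
        · exact absurd h (ne_of_gt hc2)
        · exact h)
    have hlt2 : u i < v i := lt_of_le_of_ne hle hne
    have hQ't : 0 < (-1:ℝ)^(l+1-i) * Q'.eval (u i) := by
      rw [hVprod, eval_prod_root]
      apply prod_sign_pos (l+1) i (by omega) v (u i)
      · intro m hm
        have h1 := hVhi m m le_rfl (by omega)
        have h2 := hUlo m i hm hi (by omega)
        linarith
      · intro m h1 h2
        rcases eq_or_lt_of_le h1 with rfl | h
        · exact hlt2
        · have h3 := hUhi i (m-1) (by omega) (by omega)
          have h4 := hVlo (m-1) m (by omega) h2 (by omega)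
          linarith
    have hpow : (-1:ℝ)^(l+1-i) = -(-1:ℝ)^(l-i) := by
      rw [show l + 1 - i = (l - i) + 1 from by omega, pow_succ]
      ring
    rw [hpow, hQ'eval] at hQ't
    nlinarith [hQt, hQ't, mul_pos hc2 hQt]
  -- comparison: w i ≤ v i
  have hWV : ∀ i < l + 1, w i ≤ v i := by
    intro i hi
    by_contra hle
    push_neg at hle
    have hRt : 0 < (-1:ℝ)^(l-i) * R.eval (v i) := by
      rw [hR.2.2, eval_prod_root]
      apply prod_sign_pos l i (by omega) rr (v i)
      · intro m hm
        exact hVlo m i hm hi (by omega)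
      · intro m h1 h2
        exact hVhi i m h1 h2
    have hR'eval : R'.eval (v i) = c3 * R.eval (v i) := by
      rw [hevR', hVroot i hi, zero_add]
    have hR't : 0 < (-1:ℝ)^(l+1-i) * R'.eval (v i) := by
      rw [hWprod, eval_prod_root]
      apply prod_sign_pos (l+1) i (by omega) w (v i)
      · intro m hm
        have h1 := hWhi m m le_rfl (by omega)
        have h2 := hVlo m i hm hi (by omega)
        linarith
      · intro m h1 h2
        rcases eq_or_lt_of_le h1 with rfl | h
        · exact hle
        · have h3 := hVhi i (m-1) (by omega) (by omega)
          have h4 := hWlo (m-1) m (by omega) h2 (by omega)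
          linarith
    have hpow : (-1:ℝ)^(l+1-i) = -(-1:ℝ)^(l-i) := by
      rw [show l + 1 - i = (l - i) + 1 from by omega, pow_succ]
      ring
    rw [hpow, hR'eval] at hR't
    nlinarith [hRt, hR't, mul_nonneg hc3 hRt.le]
  -- assemble
  refine ⟨u, v, w, ?_, ?_, ?_, ?_, ?_⟩
  · rw [hPQR1]; exact ⟨hUmono, hUneg, hUprod⟩
  · rw [hPQR2]; exact ⟨hVmono, hVneg, hVprod⟩
  · rw [hPQR3]; exact ⟨hWmono, hWneg, hWprod⟩
  · intro i hi; exact ⟨hWV i hi, hVU i hi⟩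
  · intro i j hij hj
    have h1 := hUhi i (j-1) (by omega) (by omega)
    have h2 := hWlo (j-1) j (by omega) hj (by omega)
    linarith

lemma invPQR_all (n l : ℕ) (hl : 3 * l ≤ n) : InvPQR n l := by
  induction l with
  | zero => exact invPQR_zero n
  | succ k ih => exact invPQR_step (ih (by omega)) hl

/-- For `n ≥ 3` and `0 ≤ l ≤ ⌊n/3⌋`, each of `P_l, Q_l, R_l` is monic of degree `l`,
has positive coefficients (for `l ≥ 1`), and all its roots are real, negative and simple. -/
theorem PQR_real_rooted (n : ℕ) (hn : 3 ≤ n) (l : ℕ) (hl : l ≤ n / 3) :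
    ∀ p ∈ [(PQR n l).1, (PQR n l).2.1, (PQR n l).2.2],
      p.Monic ∧ p.natDegree = l ∧
        (1 ≤ l → ∀ i ≤ l, 0 < p.coeff i) ∧
        NegRealSimpleRoots p := by
  have h3l : 3 * l ≤ n := by omega
  obtain ⟨pr, qr, rr, hP, hQ, hR, _, _⟩ := invPQR_all n l h3l
  intro p hp
  simp only [List.mem_cons, List.not_mem_nil, or_false] at hp
  rcases hp with rfl | rfl | rfl
  · exact ⟨hP.monic, hP.natDeg, fun _ => hP.coeff_pos, hP.negRealSimpleRoots⟩
  · exact ⟨hQ.monic, hQ.natDeg, fun _ => hQ.coeff_pos, hQ.negRealSimpleRoots⟩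
  · exact ⟨hR.monic, hR.natDeg, fun _ => hR.coeff_pos, hR.negRealSimpleRoots⟩
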